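/- Let γ > 0, μ ∈ ℝ, b ∈ ℂⁿ, and write b = B₁ + i B₂ with B₁, B₂ ∈ ℝⁿ; let B̃ = (B₁, B₂) ∈ ℝ^{n×2}, let J = [[0, 1], [−1, 0]], and set N = √(2/γ)·I₂ and R = μ J. Then with G = N Nᵀ + R − Rᵀ = (2/γ) I₂ + 2μ J, for every τ ≥ 0 one has B̃ exp(−(τ/2) G) B̃ᵀ = e^{−τ/γ} · Re( e^{−iμτ} b b^* ). In other words, every Simple Real Spectral Mixture kernel based on the Cauchy distribution is a LEG kernel. -/

import Mathlib

open Matrix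

noncomputable def phiC : ℂ →ₐ[ℝ] Matrix (Fin 2) (Fin 2) ℝ where
  toFun z := !![z.re, z.im; -z.im, z.re]
  map_one' := by
    ext i j
    fin_cases i <;> fin_cases j <;> simp [Matrix.one_apply]
  map_mul' z w := by
    ext i j
    fin_cases i <;> fin_cases j <;>
      simp [Matrix.mul_apply, Fin.sum_univ_two, Complex.mul_re, Complex.mul_im] <;> ring
  map_zero' := by
    ext i j
    fin_cases i <;> fin_cases j <;> simp
  map_add' z w := by
    ext i j
    fin_cases i <;> fin_cases j <;> simp <;> ring
  commutes' r := by
    ext i j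
    fin_cases i <;> fin_cases j <;>
      simp [Matrix.algebraMap_eq_diagonal, Matrix.diagonal, Matrix.of_apply]

lemma phiC_exp (z : ℂ) :
    NormedSpace.exp (phiC z) = phiC (Complex.exp z) := by
  letI : NormedRing (Matrix (Fin 2) (Fin 2) ℝ) := Matrix.linftyOpNormedRing
  letI : NormedAlgebra ℝ (Matrix (Fin 2) (Fin 2) ℝ) := Matrix.linftyOpNormedAlgebra
  have hc : Continuous phiC := by
    apply continuous_matrix
    intro i j
    fin_cases i <;> fin_cases j <;> simp [phiC] <;> fun_prop
  rw [Complex.exp_eq_exp_ℂ]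
  exact (NormedSpace.map_exp phiC hc z).symm


/-- **Every Simple Real Spectral Mixture kernel based on the Cauchy distribution is a LEG
kernel.**  With `b = B₁ + i B₂ ∈ ℂⁿ`, `B̃ = (B₁, B₂) ∈ ℝ^{n×2}`, `J = [[0,1],[-1,0]]`,
`N = √(2/γ) I₂`, `R = μ J` and `G = N Nᵀ + R - Rᵀ`, one has
`B̃ exp(-(τ/2) G) B̃ᵀ = e^{-τ/γ} Re(e^{-iμτ} b b^*)` for all `τ ≥ 0` (entrywise). -/
theorem simple_real_sm_is_LEG
    {n : ℕ} (γ μ : ℝ) (hγ : 0 < γ) (b : Fin n → ℂ) :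
    ∀ τ : ℝ, 0 ≤ τ → ∀ i j : Fin n,
      (let Btilde : Matrix (Fin n) (Fin 2) ℝ := Matrix.of fun i => ![(b i).re, (b i).im]
       let J : Matrix (Fin 2) (Fin 2) ℝ := !![0, 1; -1, 0]
       let N : Matrix (Fin 2) (Fin 2) ℝ := Real.sqrt (2 / γ) • (1 : Matrix (Fin 2) (Fin 2) ℝ)
       let R : Matrix (Fin 2) (Fin 2) ℝ := μ • J
       let G : Matrix (Fin 2) (Fin 2) ℝ := N * Nᵀ + R - Rᵀ
       (Btilde * NormedSpace.exp ((-(τ / 2)) • G) * Btildeᵀ) i j) =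
      Real.exp (-τ / γ) * (Complex.exp (-(Complex.I * μ * τ)) * (b i * star (b j))).re := by
  intro τ hτ i j
  simp only []
  set z : ℂ := ((-τ / γ : ℝ) : ℂ) + -(Complex.I * μ * τ) with hz
  have hG : (-(τ / 2)) • ((Real.sqrt (2 / γ) • (1 : Matrix (Fin 2) (Fin 2) ℝ)) *
      (Real.sqrt (2 / γ) • (1 : Matrix (Fin 2) (Fin 2) ℝ))ᵀ +
      μ • (!![0, 1; -1, 0] : Matrix (Fin 2) (Fin 2) ℝ) - (μ • !![0, 1; -1, 0])ᵀ) = phiC z := by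
    have hs : Real.sqrt (2 / γ) * Real.sqrt (2 / γ) = 2 / γ :=
      Real.mul_self_sqrt (by positivity)
    ext a c
    fin_cases a <;> fin_cases c <;>
      simp [phiC, hz, Matrix.mul_apply, Fin.sum_univ_two, Matrix.one_apply, hs,
        Matrix.transpose_apply, Matrix.vecHead, Matrix.vecTail, Matrix.cons_val'] <;>
      field_simp <;> simp -failIfUnchanged only [Real.sq_sqrt, hγ.le, zero_le_two] <;> ring
  rw [hG, phiC_exp]
  have hw : Complex.exp z = (Real.exp (-τ / γ) : ℂ) * Complex.exp (-(Complex.I * μ * τ)) := by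
    rw [hz, Complex.exp_add, Complex.ofReal_exp]
  have hrhs : Real.exp (-τ / γ) * (Complex.exp (-(Complex.I * μ * τ)) * (b i * star (b j))).re
      = (Complex.exp z * (b i * star (b j))).re := by
    have h2 : Complex.exp z * (b i * star (b j))
        = (Real.exp (-τ / γ) : ℂ) * (Complex.exp (-(Complex.I * μ * τ)) * (b i * star (b j))) := by
      rw [hw]; ring
    rw [h2, Complex.re_ofReal_mul]
  rw [hrhs]
  set w := Complex.exp z with hwdef
  simp [phiC, Matrix.mul_apply, Fin.sum_univ_two, Complex.mul_re, Complex.mul_im,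
    Complex.star_def]
  ring
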